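/- Fix the construction of G_g and T_g^α described in the context, with positive integers n, m, g satisfying g ≥ 2 and g ∣ 2n, and assume additionally that g²·|S_i| ≤ n for every i ∈ {1,…,m}. If for some partition α of n with l parts the tree T_g^α is isomorphic to a subgraph of G_g, then there exist at most l indices i_1 < … < i_k in {1,…,m} (k ≤ l) with S_{i_1} ∪ ⋯ ∪ S_{i_k} = N. -/

import Mathlib

/-!
Construction of the host graph `G_g` and the pattern tree `T_g^α` from the reduction
of Set Cover to kTree.

Host graph `G_g` (for a Set Cover instance with ground set `N = Fin n` and sets
`S : Fin m → Finset (Fin n)`, with `q = 2n/g`): vertices are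
`N ⊔ M ⊔ M_g ⊔ R ⊔ {r_g, r_1, r_2, r}` where `M_g` is the collection of `g`-element
subsets of `M` and `R = {v^i_j : i ∈ {1,2,3,4}, 1 ≤ j ≤ q}`.
Encoding of the four special roots in `HostV.root : Fin 4`:
`root 0 = r_g`, `root 1 = r_1`, `root 2 = r_2`, `root 3 = r`; and in
`HostV.rv i j`: `i = 0,1,2,3` encodes `v^1_j, v^2_j, v^3_j, v^4_j` respectively.
-/
inductive HostV (n m g q : ℕ) where
  | elem : Fin n → HostV n m g q
  | mset : Fin m → HostV n m g q
  | gset : {X : Finset (Fin m) // X.card = g} → HostV n m g q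
  | rv : Fin 4 → Fin q → HostV n m g q
  | root : Fin 4 → HostV n m g q

/-- The edges of the host graph `G_g` (each undirected edge listed in one orientation). -/
def hostRel (n m g q : ℕ) (S : Fin m → Finset (Fin n)) :
    HostV n m g q → HostV n m g q → Prop := fun u v =>
  -- {e, i} for e ∈ N, i ∈ M with e ∈ S_i
  (∃ e i, u = HostV.elem e ∧ v = HostV.mset i ∧ e ∈ S i) ∨
  -- {e, X} for e ∈ N, X ∈ M_g with e ∈ ⋃_{i ∈ X} S_i
  (∃ e X, u = HostV.elem e ∧ v = HostV.gset X ∧ ∃ i ∈ X.1, e ∈ S i) ∨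
  -- {r_g, X} for every X ∈ M_g
  (∃ X, u = HostV.root 0 ∧ v = HostV.gset X) ∨
  -- {r_g, v^4_j} for every j
  (∃ j, u = HostV.root 0 ∧ v = HostV.rv 3 j) ∨
  -- {r_1, v^1_j} for every j
  (∃ j, u = HostV.root 1 ∧ v = HostV.rv 0 j) ∨
  -- {r_2, v^2_j} for every j
  (∃ j, u = HostV.root 2 ∧ v = HostV.rv 1 j) ∨
  -- {r, r_g}, {r, r_1}, {r, r_2}
  (u = HostV.root 3 ∧ (v = HostV.root 0 ∨ v = HostV.root 1 ∨ v = HostV.root 2)) ∨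
  -- {r, i} for every i ∈ M
  (∃ i, u = HostV.root 3 ∧ v = HostV.mset i) ∨
  -- {r, v^3_j} for every j
  (∃ j, u = HostV.root 3 ∧ v = HostV.rv 2 j)

/-- Number of leaves of the `k`-th big star center:
`P_k = p_{(k−1)g+1} + ⋯ + p_{kg}` (0-indexed: indices `k·g, …, k·g+g−1`;
the index is always in range, the `dite` only discharges the bound proof). -/
def bigCnt (l g : ℕ) (p : Fin l → ℕ) (k : Fin (l / g)) : ℕ :=
  ∑ j : Fin g, if h : (k : ℕ) * g + (j : ℕ) < l then p ⟨(k : ℕ) * g + (j : ℕ), h⟩ else 0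

/-- Number of leaves of the `k`-th small star center: `p_{g·⌊l/g⌋ + k}`. -/
def smallCnt (l g : ℕ) (p : Fin l → ℕ) (k : Fin (l % g)) : ℕ :=
  if h : g * (l / g) + (k : ℕ) < l then p ⟨g * (l / g) + (k : ℕ), h⟩ else 0

/-- Star centers of the pattern tree: `⌊l/g⌋` big ones and `g' = l mod g` small ones. -/
abbrev PatC (l g : ℕ) := Fin (l / g) ⊕ Fin (l % g)

/-- Leaf counts of the star centers. -/
abbrev patCnt (l g : ℕ) (p : Fin l → ℕ) : PatC l g → ℕ :=
  Sum.elim (bigCnt l g p) (smallCnt l g p)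

/-!
Pattern tree `T_g^α` for a partition `α = (p_1, …, p_l)` of `n`: vertices are
`{r'_g, r'_1, r'_2, r'} ⊔ R' ⊔ centers ⊔ leaves`.
Encoding in `PatV.root : Fin 4`: `root 0 = r'_g`, `root 1 = r'_1`, `root 2 = r'_2`,
`root 3 = r'`; and `PatV.rv i j` with `i = 0,1,2,3` encodes `v'^1_j, v'^2_j, v'^3_j, v'^4_j`.
-/
inductive PatV (q : ℕ) (C : Type) (cnt : C → ℕ) where
  | root : Fin 4 → PatV q C cnt
  | rv : Fin 4 → Fin q → PatV q C cnt
  | center : C → PatV q C cnt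
  | leaf : (c : C) → Fin (cnt c) → PatV q C cnt

/-- Vertices of the pattern tree `T_g^α`. -/
abbrev PatVert (q l g : ℕ) (p : Fin l → ℕ) := PatV q (PatC l g) (patCnt l g p)

/-- The edges of the pattern tree `T_g^α` (each undirected edge listed once). -/
def patRel (q l g : ℕ) (p : Fin l → ℕ) :
    PatVert q l g p → PatVert q l g p → Prop := fun u v =>
  -- {r', r'_g}, {r', r'_1}, {r', r'_2}
  (u = PatV.root 3 ∧ (v = PatV.root 0 ∨ v = PatV.root 1 ∨ v = PatV.root 2)) ∨
  -- {r', v'^3_j} for all j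
  (∃ j, u = PatV.root 3 ∧ v = PatV.rv 2 j) ∨
  -- {r'_g, v'^4_j} for all j
  (∃ j, u = PatV.root 0 ∧ v = PatV.rv 3 j) ∨
  -- {r'_1, v'^1_j} for all j
  (∃ j, u = PatV.root 1 ∧ v = PatV.rv 0 j) ∨
  -- {r'_2, v'^2_j} for all j
  (∃ j, u = PatV.root 2 ∧ v = PatV.rv 1 j) ∨
  -- {r'_g, c_k} for the big star centers
  (∃ k, u = PatV.root 0 ∧ v = PatV.center (Sum.inl k)) ∨
  -- {r', c'_k} for the small star centers
  (∃ k, u = PatV.root 3 ∧ v = PatV.center (Sum.inr k)) ∨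
  -- each star center joined to each of its own leaves
  (∃ c i, u = PatV.center c ∧ v = PatV.leaf c i)

/-- `EA`-graph is isomorphic to a subgraph of the `EB`-graph: an injective map on
vertices carrying every (undirected) edge to an (undirected) edge. -/
def IsSubgraphIso {A B : Type*} (EA : A → A → Prop) (EB : B → B → Prop) : Prop :=
  ∃ φ : A → B, Function.Injective φ ∧
    ∀ u v, EA u v → (EB (φ u) (φ v) ∨ EB (φ v) (φ u))

/-!
STATEMENT 7 (soundness of the reduction).
With `g ≥ 2`, `g ∣ 2n` (so `q = 2n/g`), and `g²·|S_i| ≤ n` for every `i`: if for some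
partition `α = (p_1, …, p_l)` of `n` the tree `T_g^α` is isomorphic to a subgraph of
`G_g`, then at most `l` of the sets `S_i` cover `N`.
-/

/-! ### Auxiliary definitions and lemmas for the soundness proof -/

deriving instance DecidableEq for HostV
deriving instance DecidableEq for PatV

/-- symmetrized host adjacency -/
def hAdj {n m g q : ℕ} (S : Fin m → Finset (Fin n)) (u v : HostV n m g q) : Prop :=
  hostRel n m g q S u v ∨ hostRel n m g q S v u

/-- symmetrized pattern adjacency -/
def pAdj (q l g : ℕ) (p : Fin l → ℕ) (u v : PatVert q l g p) : Prop :=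
  patRel q l g p u v ∨ patRel q l g p v u

section AdjLemmas

variable {n m g q : ℕ} {S : Fin m → Finset (Fin n)}

lemma adj_mset {u : HostV n m g q} {i} (h : hAdj S u (HostV.mset i)) :
    u = HostV.root 3 ∨ ∃ e, u = HostV.elem e ∧ e ∈ S i := by
  rcases h with h | h <;>
  rcases h with ⟨e,i',h1,h2,h3⟩|⟨e,X,h1,h2,h3⟩|⟨X,h1,h2⟩|⟨j,h1,h2⟩|⟨j,h1,h2⟩|⟨j,h1,h2⟩|⟨h1,h2|h2|h2⟩|⟨i',h1,h2⟩|⟨j,h1,h2⟩ <;>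
  simp_all

lemma adj_gset {u : HostV n m g q} {X} (h : hAdj S u (HostV.gset X)) :
    u = HostV.root 0 ∨ ∃ e, u = HostV.elem e ∧ ∃ i ∈ X.1, e ∈ S i := by
  rcases h with h | h <;>
  rcases h with ⟨e,i',h1,h2,h3⟩|⟨e,X',h1,h2,h3⟩|⟨X',h1,h2⟩|⟨j,h1,h2⟩|⟨j,h1,h2⟩|⟨j,h1,h2⟩|⟨h1,h2|h2|h2⟩|⟨i',h1,h2⟩|⟨j,h1,h2⟩ <;>
  simp_all

lemma adj_elem {u : HostV n m g q} {e} (h : hAdj S u (HostV.elem e)) :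
    (∃ i, u = HostV.mset i) ∨ ∃ X, u = HostV.gset X := by
  rcases h with h | h <;>
  rcases h with ⟨e',i',h1,h2,h3⟩|⟨e',X',h1,h2,h3⟩|⟨X',h1,h2⟩|⟨j,h1,h2⟩|⟨j,h1,h2⟩|⟨j,h1,h2⟩|⟨h1,h2|h2|h2⟩|⟨i',h1,h2⟩|⟨j,h1,h2⟩ <;>
  simp_all

lemma adj_rv {u : HostV n m g q} {i : Fin 4} {j} (h : hAdj S u (HostV.rv i j)) :
    (i = 3 ∧ u = HostV.root 0) ∨ (i = 0 ∧ u = HostV.root 1) ∨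
    (i = 1 ∧ u = HostV.root 2) ∨ (i = 2 ∧ u = HostV.root 3) := by
  rcases h with h | h <;>
  rcases h with ⟨e',i',h1,h2,h3⟩|⟨e',X',h1,h2,h3⟩|⟨X',h1,h2⟩|⟨j',h1,h2⟩|⟨j',h1,h2⟩|⟨j',h1,h2⟩|⟨h1,h2|h2|h2⟩|⟨i',h1,h2⟩|⟨j',h1,h2⟩ <;>
  simp_all

lemma adj_root0 {u : HostV n m g q} (h : hAdj S u (HostV.root 0)) :
    u = HostV.root 3 ∨ (∃ X, u = HostV.gset X) ∨ ∃ j, u = HostV.rv 3 j := by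
  rcases h with h | h <;>
  rcases h with ⟨e',i',h1,h2,h3⟩|⟨e',X',h1,h2,h3⟩|⟨X',h1,h2⟩|⟨j',h1,h2⟩|⟨j',h1,h2⟩|⟨j',h1,h2⟩|⟨h1,h2|h2|h2⟩|⟨i',h1,h2⟩|⟨j',h1,h2⟩ <;>
  simp_all

lemma adj_root1 {u : HostV n m g q} (h : hAdj S u (HostV.root 1)) :
    u = HostV.root 3 ∨ ∃ j, u = HostV.rv 0 j := by
  rcases h with h | h <;>
  rcases h with ⟨e',i',h1,h2,h3⟩|⟨e',X',h1,h2,h3⟩|⟨X',h1,h2⟩|⟨j',h1,h2⟩|⟨j',h1,h2⟩|⟨j',h1,h2⟩|⟨h1,h2|h2|h2⟩|⟨i',h1,h2⟩|⟨j',h1,h2⟩ <;>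
  simp_all

lemma adj_root2 {u : HostV n m g q} (h : hAdj S u (HostV.root 2)) :
    u = HostV.root 3 ∨ ∃ j, u = HostV.rv 1 j := by
  rcases h with h | h <;>
  rcases h with ⟨e',i',h1,h2,h3⟩|⟨e',X',h1,h2,h3⟩|⟨X',h1,h2⟩|⟨j',h1,h2⟩|⟨j',h1,h2⟩|⟨j',h1,h2⟩|⟨h1,h2|h2|h2⟩|⟨i',h1,h2⟩|⟨j',h1,h2⟩ <;>
  simp_all

lemma adj_root3 {u : HostV n m g q} (h : hAdj S u (HostV.root 3)) :
    u = HostV.root 0 ∨ u = HostV.root 1 ∨ u = HostV.root 2 ∨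
    (∃ i, u = HostV.mset i) ∨ ∃ j, u = HostV.rv 2 j := by
  rcases h with h | h <;>
  rcases h with ⟨e',i',h1,h2,h3⟩|⟨e',X',h1,h2,h3⟩|⟨X',h1,h2⟩|⟨j',h1,h2⟩|⟨j',h1,h2⟩|⟨j',h1,h2⟩|⟨h1,h2|h2|h2⟩|⟨i',h1,h2⟩|⟨j',h1,h2⟩ <;>
  simp_all

end AdjLemmas

lemma arith_mset {n g c q : ℕ} (hg : 2 ≤ g) (hq : 0 < q) (hqg : q * g = 2*n)
    (hsm : g^2*c ≤ n) : c + 1 ≤ q := by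
  by_cases h0 : c = 0
  · omega
  · have h1 : 1 ≤ c := by omega
    have hgg : g ≤ g ^ 2 := by nlinarith
    have h2 : g ^ 2 ≤ n := by nlinarith
    have h3 : g * c ≤ n := by nlinarith
    have h4 : (c+1) * g ≤ q * g := by rw [hqg]; nlinarith
    exact Nat.le_of_mul_le_mul_right h4 (by omega)

lemma arith_gset {n g q m : ℕ} {S : Fin m → Finset (Fin n)} (hg : 2 ≤ g) (hq : 0 < q)
    (hqg : q*g = 2*n) (hsmall : ∀ i, g^2*(S i).card ≤ n)
    (X : Finset (Fin m)) (hX : X.card = g) {c : ℕ} (hc : c ≤ ∑ i ∈ X, (S i).card) :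
    c + 1 ≤ q := by
  set s := ∑ i ∈ X, (S i).card with hs
  by_cases h0 : s = 0
  · omega
  · obtain ⟨i, hiX, hi⟩ : ∃ i ∈ X, (S i).card ≠ 0 := by
      by_contra hcon
      push_neg at hcon
      exact h0 (Finset.sum_eq_zero hcon)
    have hic : 1 ≤ (S i).card := Nat.pos_of_ne_zero hi
    have hgn : g^2 ≤ n := by nlinarith [hsmall i]
    have hgs2 : g^2 * s ≤ g * n := by
      calc g^2*s = ∑ i ∈ X, g^2*(S i).card := by rw [Finset.mul_sum]
        _ ≤ ∑ i ∈ X, n := Finset.sum_le_sum (fun i _ => hsmall i)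
        _ = X.card * n := by rw [Finset.sum_const, smul_eq_mul]
        _ = g * n := by rw [hX]
    have hgs : g * s ≤ n := by
      have : g * (g * s) ≤ g * n := by nlinarith
      exact Nat.le_of_mul_le_mul_left this (by omega)
    have hgg : g ≤ g ^ 2 := by nlinarith
    have h4 : (c+1)*g ≤ q*g := by rw [hqg]; nlinarith
    exact Nat.le_of_mul_le_mul_right h4 (by omega)

lemma bigCnt_pos {l g : ℕ} (hg : 0 < g) {p : Fin l → ℕ} (hp : ∀ k, 0 < p k)
    (k : Fin (l/g)) : 0 < bigCnt l g p k := by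
  have h1 : ((k:ℕ)+1) * g ≤ (l/g) * g := Nat.mul_le_mul_right g k.isLt
  have h2 : (l/g)*g ≤ l := Nat.div_mul_le_self l g
  have h3 : ((k:ℕ)+1) * g = (k:ℕ)*g + g := by ring
  have hkl : (k:ℕ)*g < l := by omega
  have hterm : 0 < (if h : (k:ℕ)*g + ((⟨0, hg⟩ : Fin g):ℕ) < l
      then p ⟨(k:ℕ)*g + ((⟨0, hg⟩ : Fin g):ℕ), h⟩ else 0) := by
    rw [dif_pos (by simpa using hkl)]
    exact hp _
  have hle := Finset.single_le_sum (f := fun j : Fin g =>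
      if h : (k:ℕ)*g + (j:ℕ) < l then p ⟨(k:ℕ)*g + (j:ℕ), h⟩ else 0)
      (fun j _ => Nat.zero_le _) (Finset.mem_univ (⟨0, hg⟩ : Fin g))
  rw [bigCnt]
  exact lt_of_lt_of_le hterm hle

lemma smallCnt_pos {l g : ℕ} {p : Fin l → ℕ} (hp : ∀ k, 0 < p k)
    (k : Fin (l % g)) : 0 < smallCnt l g p k := by
  have h1 := Nat.div_add_mod l g
  have h2 : g * (l/g) + (k:ℕ) < l := by have := k.isLt; omega
  rw [smallCnt, dif_pos h2]
  exact hp _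

lemma sum_cnt (l g : ℕ) (p : Fin l → ℕ) :
    ∑ c : PatC l g, patCnt l g p c = ∑ k, p k := by
  classical
  set P : ℕ → ℕ := fun i => if h : i < l then p ⟨i, h⟩ else 0 with hP
  have key : ∀ a, ∑ k ∈ Finset.range a, ∑ j ∈ Finset.range g, P (k*g+j)
      = ∑ t ∈ Finset.range (a*g), P t := by
    intro a
    induction a with
    | zero => simp
    | succ a ih =>
        rw [Finset.sum_range_succ, ih, Nat.succ_mul, Finset.sum_range_add]
  have h1 : ∑ c : PatC l g, patCnt l g p c
      = (∑ k : Fin (l/g), bigCnt l g p k) + ∑ k : Fin (l % g), smallCnt l g p k := by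
    rw [Fintype.sum_sum_type]; rfl
  have h2 : ∑ k : Fin (l/g), bigCnt l g p k
      = ∑ k ∈ Finset.range (l/g), ∑ j ∈ Finset.range g, P (k*g+j) := by
    rw [← Fin.sum_univ_eq_sum_range (fun k => ∑ j ∈ Finset.range g, P (k*g+j)) (l/g)]
    apply Finset.sum_congr rfl
    intro k _
    rw [bigCnt, ← Fin.sum_univ_eq_sum_range (fun j => P ((k:ℕ)*g+j)) g]
  have h3 : ∑ k : Fin (l % g), smallCnt l g p k
      = ∑ k ∈ Finset.range (l % g), P ((l/g)*g + k) := by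
    rw [← Fin.sum_univ_eq_sum_range (fun k => P ((l/g)*g + k)) (l % g)]
    apply Finset.sum_congr rfl
    intro k _
    rw [smallCnt, mul_comm]
  have h4 : ∑ k : Fin l, p k = ∑ t ∈ Finset.range l, P t := by
    rw [← Fin.sum_univ_eq_sum_range P l]
    apply Finset.sum_congr rfl
    intro k _
    simp [hP]
  have h5 : l = (l/g)*g + l % g := by
    have := Nat.div_add_mod l g
    have hmc : (l/g)*g = g*(l/g) := Nat.mul_comm _ _
    omega
  rw [h1, h2, h3, h4, key]
  conv_rhs => rw [h5, Finset.sum_range_add]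
theorem setcover_to_ktree_soundness (n m g : ℕ)
    (hn : 0 < n) (hm : 0 < m) (hg : 2 ≤ g) (hdvd : g ∣ 2 * n)
    (S : Fin m → Finset (Fin n))
    (hsmall : ∀ i, g ^ 2 * (S i).card ≤ n)
    (l : ℕ) (p : Fin l → ℕ) (hp : ∀ k, 0 < p k) (hsum : ∑ k, p k = n)
    (hiso : IsSubgraphIso (patRel (2 * n / g) l g p) (hostRel n m g (2 * n / g) S)) :
    ∃ I : Finset (Fin m), I.card ≤ l ∧ ∀ e : Fin n, ∃ i ∈ I, e ∈ S i := by
  classical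
  set q := 2 * n / g with hqdef
  obtain ⟨φ, hinj, hedge⟩ := hiso
  have hqg : q * g = 2 * n := Nat.div_mul_cancel hdvd
  have hq : 0 < q := by
    rcases Nat.eq_zero_or_pos q with h | h
    · rw [h] at hqg; omega
    · exact h
  have hpush : ∀ u v : PatVert q l g p, pAdj q l g p u v → hAdj S (φ u) (φ v) := by
    intro u v h
    rcases h with h | h
    · exact hedge u v h
    · exact Or.symm (hedge v u h)
  have hinjne : ∀ (u v : PatVert q l g p), u ≠ v → φ u ≠ φ v :=
    fun u v h hc => h (hinj hc)
  have hengine : ∀ (x : PatVert q l g p) (A : Finset (PatVert q l g p)),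
      (∀ a ∈ A, pAdj q l g p a x) → ∀ B : Finset (HostV n m g q),
      (∀ u, hAdj S u (φ x) → u ∈ B) → A.card ≤ B.card := by
    intro x A hA B hB
    rw [← Finset.card_image_of_injective A hinj]
    apply Finset.card_le_card
    intro u hu
    rw [Finset.mem_image] at hu
    obtain ⟨a, ha, rfl⟩ := hu
    exact hB _ (hpush a x (hA a ha))
  -- host neighborhood finsets with cardinality bounds
  have hBmset : ∀ i : Fin m, ∃ B : Finset (HostV n m g q),
      (∀ u, hAdj S u (HostV.mset i) → u ∈ B) ∧ B.card ≤ q := by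
    intro i
    refine ⟨insert (HostV.root 3) ((S i).image HostV.elem), ?_, ?_⟩
    · intro u hu
      rcases adj_mset hu with rfl | ⟨e, rfl, he⟩
      · exact Finset.mem_insert_self _ _
      · exact Finset.mem_insert_of_mem (Finset.mem_image_of_mem _ he)
    · have h1 := Finset.card_insert_le (HostV.root 3 : HostV n m g q) ((S i).image HostV.elem)
      have h2 := Finset.card_image_le (s := S i) (f := (HostV.elem : Fin n → HostV n m g q))
      have h3 := arith_mset hg hq hqg (hsmall i)
      omega
  have hBgset : ∀ X : {X : Finset (Fin m) // X.card = g}, ∃ B : Finset (HostV n m g q),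
      (∀ u, hAdj S u (HostV.gset X) → u ∈ B) ∧ B.card ≤ q := by
    intro X
    refine ⟨insert (HostV.root 0) ((X.1.biUnion S).image HostV.elem), ?_, ?_⟩
    · intro u hu
      rcases adj_gset hu with rfl | ⟨e, rfl, i, hiX, hei⟩
      · exact Finset.mem_insert_self _ _
      · exact Finset.mem_insert_of_mem
          (Finset.mem_image_of_mem _ (Finset.mem_biUnion.mpr ⟨i, hiX, hei⟩))
    · have h1 := Finset.card_insert_le (HostV.root 0 : HostV n m g q) ((X.1.biUnion S).image HostV.elem)
      have h2 := Finset.card_image_le (s := X.1.biUnion S) (f := (HostV.elem : Fin n → HostV n m g q))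
      have h3 : (X.1.biUnion S).card + 1 ≤ q :=
        arith_gset hg hq hqg hsmall X.1 X.2 Finset.card_biUnion_le
      omega
  have hrvsing : ∀ (i : Fin 4) (j : Fin q), ∃ t : Fin 4,
      ∀ u, hAdj S u (HostV.rv i j) → u ∈ ({HostV.root t} : Finset (HostV n m g q)) := by
    intro i j
    fin_cases i
    · exact ⟨1, fun u hu => by
        rcases adj_rv hu with ⟨hh, rfl⟩ | ⟨hh, rfl⟩ | ⟨hh, rfl⟩ | ⟨hh, rfl⟩ <;> simp_all⟩
    · exact ⟨2, fun u hu => by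
        rcases adj_rv hu with ⟨hh, rfl⟩ | ⟨hh, rfl⟩ | ⟨hh, rfl⟩ | ⟨hh, rfl⟩ <;> simp_all⟩
    · exact ⟨3, fun u hu => by
        rcases adj_rv hu with ⟨hh, rfl⟩ | ⟨hh, rfl⟩ | ⟨hh, rfl⟩ | ⟨hh, rfl⟩ <;> simp_all⟩
    · exact ⟨0, fun u hu => by
        rcases adj_rv hu with ⟨hh, rfl⟩ | ⟨hh, rfl⟩ | ⟨hh, rfl⟩ | ⟨hh, rfl⟩ <;> simp_all⟩
  -- pattern edges
  have pE30 : patRel q l g p (PatV.root 3) (PatV.root 0) := Or.inl ⟨rfl, Or.inl rfl⟩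
  have pE31 : patRel q l g p (PatV.root 3) (PatV.root 1) := Or.inl ⟨rfl, Or.inr (Or.inl rfl)⟩
  have pE32 : patRel q l g p (PatV.root 3) (PatV.root 2) := Or.inl ⟨rfl, Or.inr (Or.inr rfl)⟩
  have pE3rv2 : ∀ j, patRel q l g p (PatV.root 3) (PatV.rv 2 j) :=
    fun j => Or.inr (Or.inl ⟨j, rfl, rfl⟩)
  have pE0rv3 : ∀ j, patRel q l g p (PatV.root 0) (PatV.rv 3 j) :=
    fun j => Or.inr (Or.inr (Or.inl ⟨j, rfl, rfl⟩))
  have pE1rv0 : ∀ j, patRel q l g p (PatV.root 1) (PatV.rv 0 j) :=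
    fun j => Or.inr (Or.inr (Or.inr (Or.inl ⟨j, rfl, rfl⟩)))
  have pE2rv1 : ∀ j, patRel q l g p (PatV.root 2) (PatV.rv 1 j) :=
    fun j => Or.inr (Or.inr (Or.inr (Or.inr (Or.inl ⟨j, rfl, rfl⟩))))
  have pE0c : ∀ k, patRel q l g p (PatV.root 0) (PatV.center (Sum.inl k)) :=
    fun k => Or.inr (Or.inr (Or.inr (Or.inr (Or.inr (Or.inl ⟨k, rfl, rfl⟩)))))
  have pE3c : ∀ k, patRel q l g p (PatV.root 3) (PatV.center (Sum.inr k)) :=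
    fun k => Or.inr (Or.inr (Or.inr (Or.inr (Or.inr (Or.inr (Or.inl ⟨k, rfl, rfl⟩))))))
  have pEleaf : ∀ c i, patRel q l g p (PatV.center c) (PatV.leaf c i) :=
    fun c i => Or.inr (Or.inr (Or.inr (Or.inr (Or.inr (Or.inr (Or.inr ⟨c, i, rfl, rfl⟩))))))
  -- pattern neighborhood finsets
  have hrvinj : ∀ t : Fin 4, Function.Injective
      (fun j : Fin q => (PatV.rv t j : PatVert q l g p)) := by
    intro t a b hab
    simpa using hab
  have himgcard : ∀ t : Fin 4,
      ((Finset.univ : Finset (Fin q)).image fun j => (PatV.rv t j : PatVert q l g p)).card = q := by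
    intro t
    rw [Finset.card_image_of_injective _ (hrvinj t), Finset.card_univ, Fintype.card_fin]
  set A0 : Finset (PatVert q l g p) :=
    insert (PatV.root 3) (Finset.univ.image fun j => PatV.rv 3 j) with hA0def
  set A1 : Finset (PatVert q l g p) :=
    insert (PatV.root 3) (Finset.univ.image fun j => PatV.rv 0 j) with hA1def
  set A2 : Finset (PatVert q l g p) :=
    insert (PatV.root 3) (Finset.univ.image fun j => PatV.rv 1 j) with hA2def
  set A3 : Finset (PatVert q l g p) :=
    insert (PatV.root 0) (insert (PatV.root 1) (insert (PatV.root 2)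
      (Finset.univ.image fun j => PatV.rv 2 j))) with hA3def
  have hA0card : A0.card = q + 1 := by
    rw [hA0def, Finset.card_insert_of_notMem (by simp), himgcard]
  have hA1card : A1.card = q + 1 := by
    rw [hA1def, Finset.card_insert_of_notMem (by simp), himgcard]
  have hA2card : A2.card = q + 1 := by
    rw [hA2def, Finset.card_insert_of_notMem (by simp), himgcard]
  have hA3card : A3.card = q + 3 := by
    rw [hA3def, Finset.card_insert_of_notMem (by simp),
      Finset.card_insert_of_notMem (by simp),
      Finset.card_insert_of_notMem (by simp), himgcard]
  have hA0adj : ∀ a ∈ A0, pAdj q l g p a (PatV.root 0) := by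
    intro a ha
    rw [hA0def, Finset.mem_insert, Finset.mem_image] at ha
    rcases ha with rfl | ⟨j, -, rfl⟩
    · exact Or.inl pE30
    · exact Or.inr (pE0rv3 j)
  have hA1adj : ∀ a ∈ A1, pAdj q l g p a (PatV.root 1) := by
    intro a ha
    rw [hA1def, Finset.mem_insert, Finset.mem_image] at ha
    rcases ha with rfl | ⟨j, -, rfl⟩
    · exact Or.inl pE31
    · exact Or.inr (pE1rv0 j)
  have hA2adj : ∀ a ∈ A2, pAdj q l g p a (PatV.root 2) := by
    intro a ha
    rw [hA2def, Finset.mem_insert, Finset.mem_image] at ha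
    rcases ha with rfl | ⟨j, -, rfl⟩
    · exact Or.inl pE32
    · exact Or.inr (pE2rv1 j)
  have hA3adj : ∀ a ∈ A3, pAdj q l g p a (PatV.root 3) := by
    intro a ha
    rw [hA3def, Finset.mem_insert, Finset.mem_insert, Finset.mem_insert,
      Finset.mem_image] at ha
    rcases ha with rfl | rfl | rfl | ⟨j, -, rfl⟩
    · exact Or.inr pE30
    · exact Or.inr pE31
    · exact Or.inr pE32
    · exact Or.inr (pE3rv2 j)
  -- high-degree vertices map to roots or elements
  have hhigh : ∀ (x : PatVert q l g p) (A : Finset (PatVert q l g p)),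
      (∀ a ∈ A, pAdj q l g p a x) → A.card = q + 1 →
      (∃ t, φ x = HostV.root t) ∨ (∃ e, φ x = HostV.elem e) := by
    intro x A hA hcard
    rcases hfx : φ x with e | i | X | ⟨i, j⟩ | t
    · exact Or.inr ⟨e, rfl⟩
    · exfalso
      obtain ⟨B, hB, hBc⟩ := hBmset i
      have := hengine x A hA B (by rw [hfx]; exact hB)
      omega
    · exfalso
      obtain ⟨B, hB, hBc⟩ := hBgset X
      have := hengine x A hA B (by rw [hfx]; exact hB)
      omega
    · exfalso
      obtain ⟨t, hB⟩ := hrvsing i j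
      have := hengine x A hA _ (by rw [hfx]; exact hB)
      rw [Finset.card_singleton] at this
      omega
    · exact Or.inl ⟨t, rfl⟩
  -- locate the image of r'
  have hy3 : φ (PatV.root 3 : PatVert q l g p) = HostV.root 3 := by
    have hz1 := hhigh (PatV.root 1) A1 hA1adj hA1card
    have hz2 := hhigh (PatV.root 2) A2 hA2adj hA2card
    have hadj1 : hAdj S (φ (PatV.root 1 : PatVert q l g p)) (φ (PatV.root 3)) :=
      hpush _ _ (Or.inr pE31)
    have hadj2 : hAdj S (φ (PatV.root 2 : PatVert q l g p)) (φ (PatV.root 3)) :=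
      hpush _ _ (Or.inr pE32)
    have hne12 : φ (PatV.root 1 : PatVert q l g p) ≠ φ (PatV.root 2) :=
      hinjne _ _ (by simp)
    rcases hy : φ (PatV.root 3 : PatVert q l g p) with e | i | X | ⟨i, j⟩ | t
    · exfalso
      rw [hy] at hadj1
      rcases adj_elem hadj1 with ⟨i', hi'⟩ | ⟨X', hX'⟩ <;>
        rcases hz1 with ⟨t', ht'⟩ | ⟨e', he'⟩
      · exact nomatch (ht'.symm.trans hi')
      · exact nomatch (he'.symm.trans hi')
      · exact nomatch (ht'.symm.trans hX')
      · exact nomatch (he'.symm.trans hX')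
    · exfalso
      obtain ⟨B, hB, hBc⟩ := hBmset i
      have := hengine _ A3 hA3adj B (by rw [hy]; exact hB)
      omega
    · exfalso
      obtain ⟨B, hB, hBc⟩ := hBgset X
      have := hengine _ A3 hA3adj B (by rw [hy]; exact hB)
      omega
    · exfalso
      obtain ⟨t, hB⟩ := hrvsing i j
      have := hengine _ A3 hA3adj _ (by rw [hy]; exact hB)
      rw [hA3card, Finset.card_singleton] at this
      omega
    · rw [hy] at hadj1 hadj2
      fin_cases t
      · exfalso
        have e1 : φ (PatV.root 1 : PatVert q l g p) = HostV.root 3 := by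
          rcases adj_root0 hadj1 with h | ⟨X', h⟩ | ⟨j', h⟩
          · exact h
          · rcases hz1 with ⟨t', ht'⟩ | ⟨e', he'⟩
            · exact nomatch (ht'.symm.trans h)
            · exact nomatch (he'.symm.trans h)
          · rcases hz1 with ⟨t', ht'⟩ | ⟨e', he'⟩
            · exact nomatch (ht'.symm.trans h)
            · exact nomatch (he'.symm.trans h)
        have e2 : φ (PatV.root 2 : PatVert q l g p) = HostV.root 3 := by
          rcases adj_root0 hadj2 with h | ⟨X', h⟩ | ⟨j', h⟩
          · exact h
          · rcases hz2 with ⟨t', ht'⟩ | ⟨e', he'⟩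
            · exact nomatch (ht'.symm.trans h)
            · exact nomatch (he'.symm.trans h)
          · rcases hz2 with ⟨t', ht'⟩ | ⟨e', he'⟩
            · exact nomatch (ht'.symm.trans h)
            · exact nomatch (he'.symm.trans h)
        exact hne12 (e1.trans e2.symm)
      · exfalso
        have e1 : φ (PatV.root 1 : PatVert q l g p) = HostV.root 3 := by
          rcases adj_root1 hadj1 with h | ⟨j', h⟩
          · exact h
          · rcases hz1 with ⟨t', ht'⟩ | ⟨e', he'⟩
            · exact nomatch (ht'.symm.trans h)
            · exact nomatch (he'.symm.trans h)
        have e2 : φ (PatV.root 2 : PatVert q l g p) = HostV.root 3 := by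
          rcases adj_root1 hadj2 with h | ⟨j', h⟩
          · exact h
          · rcases hz2 with ⟨t', ht'⟩ | ⟨e', he'⟩
            · exact nomatch (ht'.symm.trans h)
            · exact nomatch (he'.symm.trans h)
        exact hne12 (e1.trans e2.symm)
      · exfalso
        have e1 : φ (PatV.root 1 : PatVert q l g p) = HostV.root 3 := by
          rcases adj_root2 hadj1 with h | ⟨j', h⟩
          · exact h
          · rcases hz1 with ⟨t', ht'⟩ | ⟨e', he'⟩
            · exact nomatch (ht'.symm.trans h)
            · exact nomatch (he'.symm.trans h)
        have e2 : φ (PatV.root 2 : PatVert q l g p) = HostV.root 3 := by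
          rcases adj_root2 hadj2 with h | ⟨j', h⟩
          · exact h
          · rcases hz2 with ⟨t', ht'⟩ | ⟨e', he'⟩
            · exact nomatch (ht'.symm.trans h)
            · exact nomatch (he'.symm.trans h)
        exact hne12 (e1.trans e2.symm)
      · rfl
  -- the images of r'_g, r'_1, r'_2 are among the three special roots
  have hzmem : ∀ (x : PatVert q l g p) (A : Finset (PatVert q l g p)),
      (∀ a ∈ A, pAdj q l g p a x) → A.card = q + 1 →
      pAdj q l g p x (PatV.root 3) →
      φ x = HostV.root 0 ∨ φ x = HostV.root 1 ∨ φ x = HostV.root 2 := by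
    intro x A hA hcard hadjx
    have hadj : hAdj S (φ x) (HostV.root 3) := by
      rw [← hy3]; exact hpush _ _ hadjx
    rcases adj_root3 hadj with h | h | h | ⟨i, h⟩ | ⟨j, h⟩
    · exact Or.inl h
    · exact Or.inr (Or.inl h)
    · exact Or.inr (Or.inr h)
    · exfalso
      obtain ⟨B, hB, hBc⟩ := hBmset i
      have := hengine x A hA B (by rw [h]; exact hB)
      omega
    · exfalso
      obtain ⟨t, hB⟩ := hrvsing 2 j
      have := hengine x A hA _ (by rw [h]; exact hB)
      rw [Finset.card_singleton] at this
      omega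
  have hz0mem := hzmem (PatV.root 0) A0 hA0adj hA0card (Or.inr pE30)
  have hz1mem := hzmem (PatV.root 1) A1 hA1adj hA1card (Or.inr pE31)
  have hz2mem := hzmem (PatV.root 2) A2 hA2adj hA2card (Or.inr pE32)
  -- the three special roots are exactly the images of r'_g, r'_1, r'_2
  have h0m : φ (PatV.root 0 : PatVert q l g p) ∈
      ({HostV.root 0, HostV.root 1, HostV.root 2} : Finset (HostV n m g q)) := by
    rcases hz0mem with h | h | h <;> simp [h]
  have h1m : φ (PatV.root 1 : PatVert q l g p) ∈
      ({HostV.root 0, HostV.root 1, HostV.root 2} : Finset (HostV n m g q)) := by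
    rcases hz1mem with h | h | h <;> simp [h]
  have h2m : φ (PatV.root 2 : PatVert q l g p) ∈
      ({HostV.root 0, HostV.root 1, HostV.root 2} : Finset (HostV n m g q)) := by
    rcases hz2mem with h | h | h <;> simp [h]
  have htrip : ({HostV.root 0, HostV.root 1, HostV.root 2} : Finset (HostV n m g q))
      = {φ (PatV.root 0 : PatVert q l g p), φ (PatV.root 1), φ (PatV.root 2)} := by
    symm
    apply Finset.eq_of_subset_of_card_le
    · intro u hu
      simp only [Finset.mem_insert, Finset.mem_singleton] at hu
      rcases hu with rfl | rfl | rfl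
      exacts [h0m, h1m, h2m]
    · have hc1 : ({φ (PatV.root 0 : PatVert q l g p), φ (PatV.root 1), φ (PatV.root 2)} :
          Finset (HostV n m g q)).card = 3 := by
        rw [Finset.card_insert_of_notMem, Finset.card_insert_of_notMem,
          Finset.card_singleton]
        · simp only [Finset.mem_singleton]
          exact hinjne _ _ (by simp)
        · simp only [Finset.mem_insert, Finset.mem_singleton]
          push_neg
          exact ⟨hinjne _ _ (by simp), hinjne _ _ (by simp)⟩
      have t1 := Finset.card_insert_le (HostV.root 0 : HostV n m g q)
        {HostV.root 1, HostV.root 2}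
      have t2 := Finset.card_insert_le (HostV.root 1 : HostV n m g q) {HostV.root 2}
      have t3 : ({HostV.root 2} : Finset (HostV n m g q)).card = 1 := Finset.card_singleton _
      omega
  -- centers do not map to pendant vertices
  have hcnotrv : ∀ (c : PatC l g), 0 < patCnt l g p c → ∀ (i : Fin 4) (j : Fin q),
      φ (PatV.center c : PatVert q l g p) ≠ HostV.rv i j := by
    intro c hpos i j hcon
    obtain ⟨tp, hpar⟩ : ∃ t : Fin 4, patRel q l g p (PatV.root t) (PatV.center c) := by
      cases c with
      | inl k => exact ⟨0, pE0c k⟩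
      | inr k => exact ⟨3, pE3c k⟩
    obtain ⟨t, hB⟩ := hrvsing i j
    have hcard := hengine (PatV.center c)
      ({PatV.root tp, PatV.leaf c ⟨0, hpos⟩} : Finset (PatVert q l g p))
      (by
        intro a ha
        simp only [Finset.mem_insert, Finset.mem_singleton] at ha
        rcases ha with rfl | rfl
        · exact Or.inl hpar
        · exact Or.inr (pEleaf _ _))
      _ (by rw [hcon]; exact hB)
    have hc2 : ({PatV.root tp, PatV.leaf c ⟨0, hpos⟩} : Finset (PatVert q l g p)).card = 2 := by
      rw [Finset.card_insert_of_notMem (by simp), Finset.card_singleton]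
    rw [hc2, Finset.card_singleton] at hcard
    omega
  -- big centers map to g-sets
  have hz0big : ∀ _ : Fin (l/g), φ (PatV.root 0 : PatVert q l g p) = HostV.root 0 := by
    intro k
    have hcpos : 0 < patCnt l g p (Sum.inl k) := bigCnt_pos (by omega) hp k
    have hcadj : pAdj q l g p (PatV.center (Sum.inl k)) (PatV.root 0) := Or.inr (pE0c k)
    have hcne3 : φ (PatV.center (Sum.inl k) : PatVert q l g p) ≠ HostV.root 3 := by
      rw [← hy3]; exact hinjne _ _ (by simp)
    rcases hz0mem with h0 | h1 | h2
    · exact h0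
    · exfalso
      have hadjc : hAdj S (φ (PatV.center (Sum.inl k) : PatVert q l g p)) (HostV.root 1) := by
        rw [← h1]; exact hpush _ _ hcadj
      rcases adj_root1 hadjc with hc | ⟨j, hc⟩
      · exact hcne3 hc
      · exact hcnotrv _ hcpos 0 j hc
    · exfalso
      have hadjc : hAdj S (φ (PatV.center (Sum.inl k) : PatVert q l g p)) (HostV.root 2) := by
        rw [← h2]; exact hpush _ _ hcadj
      rcases adj_root2 hadjc with hc | ⟨j, hc⟩
      · exact hcne3 hc
      · exact hcnotrv _ hcpos 1 j hc
  have hbigX : ∀ k : Fin (l/g), ∃ X,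
      φ (PatV.center (Sum.inl k) : PatVert q l g p) = HostV.gset X := by
    intro k
    have hcpos : 0 < patCnt l g p (Sum.inl k) := bigCnt_pos (by omega) hp k
    have hadjc : hAdj S (φ (PatV.center (Sum.inl k) : PatVert q l g p)) (HostV.root 0) := by
      rw [← hz0big k]; exact hpush _ _ (Or.inr (pE0c k))
    rcases adj_root0 hadjc with hc | ⟨X, hc⟩ | ⟨j, hc⟩
    · exfalso
      rw [← hy3] at hc
      exact hinjne _ _ (by simp) hc
    · exact ⟨X, hc⟩
    · exact absurd hc (hcnotrv _ hcpos 3 j)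
  -- small centers map to msets
  have hsmalli : ∀ k : Fin (l % g), ∃ i : Fin m,
      φ (PatV.center (Sum.inr k) : PatVert q l g p) = HostV.mset i := by
    intro k
    have hcpos : 0 < patCnt l g p (Sum.inr k) := smallCnt_pos hp k
    have hadjc : hAdj S (φ (PatV.center (Sum.inr k) : PatVert q l g p)) (HostV.root 3) := by
      rw [← hy3]; exact hpush _ _ (Or.inr (pE3c k))
    have hnr : ∀ t : Fin 4, (HostV.root t : HostV n m g q) ∈
        ({HostV.root 0, HostV.root 1, HostV.root 2} : Finset (HostV n m g q)) →
        φ (PatV.center (Sum.inr k) : PatVert q l g p) ≠ HostV.root t := by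
      intro t ht hcon
      rw [htrip] at ht
      simp only [Finset.mem_insert, Finset.mem_singleton] at ht
      rcases ht with h | h | h
      · exact hinjne (PatV.center (Sum.inr k)) (PatV.root 0) (by simp) (hcon.trans h)
      · exact hinjne (PatV.center (Sum.inr k)) (PatV.root 1) (by simp) (hcon.trans h)
      · exact hinjne (PatV.center (Sum.inr k)) (PatV.root 2) (by simp) (hcon.trans h)
    rcases adj_root3 hadjc with hc | hc | hc | ⟨i, hc⟩ | ⟨j, hc⟩
    · exact absurd hc (hnr 0 (by simp))
    · exact absurd hc (hnr 1 (by simp))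
    · exact absurd hc (hnr 2 (by simp))
    · exact ⟨i, hc⟩
    · exact absurd hc (hcnotrv _ hcpos 2 j)
  choose Xf hXf using hbigX
  choose If hIf using hsmalli
  set I : Finset (Fin m) :=
    (Finset.univ.biUnion fun k : Fin (l/g) => (Xf k).1) ∪ Finset.univ.image If with hIdef
  have hIcard : I.card ≤ l := by
    have h1 : (Finset.univ.biUnion fun k : Fin (l/g) => (Xf k).1).card ≤ (l/g) * g := by
      refine le_trans Finset.card_biUnion_le (le_of_eq ?_)
      calc ∑ k : Fin (l/g), (Xf k).1.card = ∑ _k : Fin (l/g), g :=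
            Finset.sum_congr rfl (fun k _ => (Xf k).2)
        _ = (l/g) * g := by
            rw [Finset.sum_const, Finset.card_univ, Fintype.card_fin, smul_eq_mul]
    have h2 : (Finset.univ.image If).card ≤ l % g := by
      apply le_trans Finset.card_image_le
      rw [Finset.card_univ, Fintype.card_fin]
    have h3 := Finset.card_union_le
      (Finset.univ.biUnion fun k : Fin (l/g) => (Xf k).1) (Finset.univ.image If)
    have h4 := Nat.div_add_mod l g
    have h5 : (l/g)*g = g*(l/g) := Nat.mul_comm _ _
    rw [hIdef]
    omega
  -- every leaf maps to an element covered by I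
  have hleafall : ∀ ct : Σ c : PatC l g, Fin (patCnt l g p c),
      ∃ e : Fin n, φ (PatV.leaf ct.1 ct.2 : PatVert q l g p) = HostV.elem e ∧
        ∃ i ∈ I, e ∈ S i := by
    rintro ⟨c, t⟩
    cases c with
    | inl k =>
        have hadj : hAdj S (φ (PatV.leaf (Sum.inl k) t : PatVert q l g p))
            (HostV.gset (Xf k)) := by
          rw [← hXf k]; exact Or.symm (hpush _ _ (Or.inl (pEleaf _ _)))
        rcases adj_gset hadj with hc | ⟨e, he, i, hiX, hei⟩
        · exfalso
          rw [← hz0big k] at hc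
          exact hinjne _ _ (by simp) hc
        · refine ⟨e, he, i, ?_, hei⟩
          rw [hIdef]
          exact Finset.mem_union_left _ (Finset.mem_biUnion.mpr ⟨k, Finset.mem_univ _, hiX⟩)
    | inr k =>
        have hadj : hAdj S (φ (PatV.leaf (Sum.inr k) t : PatVert q l g p))
            (HostV.mset (If k)) := by
          rw [← hIf k]; exact Or.symm (hpush _ _ (Or.inl (pEleaf _ _)))
        rcases adj_mset hadj with hc | ⟨e, he, hei⟩
        · exfalso
          rw [← hy3] at hc
          exact hinjne _ _ (by simp) hc
        · refine ⟨e, he, If k, ?_, hei⟩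
          rw [hIdef]
          exact Finset.mem_union_right _ (Finset.mem_image_of_mem _ (Finset.mem_univ _))
  choose F hF1 hF2 using hleafall
  have hFinj : Function.Injective F := by
    rintro ⟨c1, t1⟩ ⟨c2, t2⟩ hab
    have h1 : φ (PatV.leaf c1 t1 : PatVert q l g p) = φ (PatV.leaf c2 t2) := by
      rw [hF1 ⟨c1, t1⟩, hF1 ⟨c2, t2⟩, hab]
    have h2 := hinj h1
    injection h2 with hc hl
    subst hc
    rw [eq_of_heq hl]
  have hcardSig : Fintype.card (Σ c : PatC l g, Fin (patCnt l g p c)) = n := by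
    simp only [Fintype.card_sigma, Fintype.card_fin]
    rw [sum_cnt l g p, hsum]
  have hFbij : Function.Bijective F :=
    (Fintype.bijective_iff_injective_and_card F).mpr
      ⟨hFinj, by rw [hcardSig, Fintype.card_fin]⟩
  refine ⟨I, hIcard, fun e => ?_⟩
  obtain ⟨ct, rfl⟩ := hFbij.2 e
  exact hF2 ct
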